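/- There exists a universal constant C > 0 such that for every dimension d ≥ 1, every integer Δ ≥ 2, every opening cost f > 0, and every finite nonempty set P ⊆ {1, …, Δ}^d ⊆ ℝ^d, there exists a partition 𝒞 of P such that f · |𝒞| ≤ C · d · (log₂ Δ) · OPT(P, f), and every part S ∈ 𝒞 with Diam(S) > 0 satisfies |S| ≤ C · f / Diam(S), where Diam denotes Euclidean diameter. -/

import Mathlib

/-- The Uniform Facility Location cost of opening the (nonempty, finite) set of
facilities `F` for the set of clients `P`. -/
noncomputable def uflCost (d : ℕ) (f : ℝ)
    (P F : Finset (EuclideanSpace ℝ (Fin d))) : ℝ :=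
  ∑ p ∈ P, Metric.infDist p (F : Set (EuclideanSpace ℝ (Fin d))) + f * F.card

/-- The optimal Uniform Facility Location cost. -/
noncomputable def uflOPT (d : ℕ) (f : ℝ)
    (P : Finset (EuclideanSpace ℝ (Fin d))) : ℝ :=
  sInf {c : ℝ | ∃ F : Finset (EuclideanSpace ℝ (Fin d)), F.Nonempty ∧ c = uflCost d f P F}

/-- Coordinate distances are dominated by the Euclidean distance. -/
lemma coord_dist_le_dist {d : ℕ} (x y : EuclideanSpace ℝ (Fin d)) (i : Fin d) :
    dist (x i) (y i) ≤ dist x y := by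
  rw [EuclideanSpace.dist_eq]
  rw [show dist (x i) (y i) = Real.sqrt (dist (x i) (y i)^2) from (Real.sqrt_sq dist_nonneg).symm]
  apply Real.sqrt_le_sqrt
  exact Finset.single_le_sum (f := fun j => dist (x j) (y j)^2)
    (fun j _ => sq_nonneg _) (Finset.mem_univ i)

/-- If all coordinate distances are at most `B`, the distance is at most `√(d·B²)`. -/
lemma dist_le_sqrt_of_coord {d : ℕ} (x y : EuclideanSpace ℝ (Fin d)) (B : ℝ)
    (h : ∀ i, dist (x i) (y i) ≤ B) : dist x y ≤ Real.sqrt (d * B^2) := by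
  rw [EuclideanSpace.dist_eq]
  apply Real.sqrt_le_sqrt
  calc ∑ i, dist (x i) (y i)^2 ≤ ∑ _i : Fin d, B^2 := by
        apply Finset.sum_le_sum
        intro i _
        exact pow_le_pow_left₀ dist_nonneg (h i) 2
  _ = d * B^2 := by rw [Finset.sum_const]; simp [mul_comm]

set_option maxHeartbeats 2000000 in
/-- **extended MP clustering.** There is a universal constant
`C > 0` such that for every `d ≥ 1`, integer `Δ ≥ 2`, opening cost `f > 0` and
finite nonempty `P ⊆ {1, …, Δ}^d`, there is a partition `𝒞` of `P` with
`f · |𝒞| ≤ C · d · log₂ Δ · OPT(P, f)`, and every part `S ∈ 𝒞` of positive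
diameter satisfies `|S| ≤ C · f / Diam(S)`. -/
theorem stmt_7 :
    ∃ C : ℝ, 0 < C ∧
      ∀ (d : ℕ), 1 ≤ d → ∀ (Δ : ℕ), 2 ≤ Δ → ∀ f : ℝ, 0 < f →
      ∀ P : Finset (EuclideanSpace ℝ (Fin d)), P.Nonempty →
        (∀ p ∈ P, ∀ i : Fin d, ∃ k : ℕ, 1 ≤ k ∧ k ≤ Δ ∧ p i = (k : ℝ)) →
        ∃ 𝒞 : Finset (Finset (EuclideanSpace ℝ (Fin d))),
          (∀ S ∈ 𝒞, S.Nonempty ∧ S ⊆ P) ∧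
          (∀ p ∈ P, ∃! S, S ∈ 𝒞 ∧ p ∈ S) ∧
          f * 𝒞.card ≤ C * d * Real.logb 2 Δ * uflOPT d f P ∧
          (∀ S ∈ 𝒞, 0 < Metric.diam (S : Set (EuclideanSpace ℝ (Fin d))) →
            (S.card : ℝ) ≤ C * f / Metric.diam (S : Set (EuclideanSpace ℝ (Fin d)))) := by
  classical
  refine ⟨100, by norm_num, ?_⟩
  intro d hd Δ hΔ f hf P hP hgrid
  set L := Nat.clog 2 Δ with hLdef
  -- distinct points of P are at distance ≥ 1
  have hsep : ∀ p ∈ P, ∀ q ∈ P, p ≠ q → (1:ℝ) ≤ dist p q := by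
    intro p hp q hq hne
    obtain ⟨i, hi⟩ : ∃ i, p i ≠ q i := by
      by_contra hc; push_neg at hc; exact hne (by ext i; exact hc i)
    obtain ⟨a, ha1, _, ha3⟩ := hgrid p hp i
    obtain ⟨b, hb1, _, hb3⟩ := hgrid q hq i
    have hab : (a:ℤ) ≠ (b:ℤ) := by
      intro h; apply hi; rw [ha3, hb3, show a = b by exact_mod_cast h]
    have habs : (1:ℤ) ≤ |(a:ℤ) - (b:ℤ)| := Int.one_le_abs (sub_ne_zero.mpr hab)
    have h1 : (1:ℝ) ≤ |p i - q i| := by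
      rw [ha3, hb3]
      have hcast : ((|(a:ℤ) - (b:ℤ)| : ℤ) : ℝ) = |(a:ℝ) - (b:ℝ)| := by push_cast; ring
      have hcst : (1:ℝ) ≤ ((|(a:ℤ) - (b:ℤ)| : ℤ) : ℝ) := by exact_mod_cast habs
      rw [hcast] at hcst
      simpa using hcst
    have h2 : |p i - q i| ≤ dist p q := by
      rw [← Real.dist_eq]; exact coord_dist_le_dist p q i
    linarith
  -- points of P are at distance ≤ 2^(d+L)
  have hub : ∀ p ∈ P, ∀ q ∈ P, dist p q ≤ (2:ℝ)^(d+L) := by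
    intro p hp q hq
    have hB : ∀ i, dist (p i) (q i) ≤ (Δ:ℝ) := by
      intro i
      obtain ⟨a, ha1, ha2, ha3⟩ := hgrid p hp i
      obtain ⟨b, hb1, hb2, hb3⟩ := hgrid q hq i
      rw [Real.dist_eq, ha3, hb3, abs_le]
      have c1 : (1:ℝ) ≤ (a:ℝ) := by exact_mod_cast ha1
      have c2 : (a:ℝ) ≤ (Δ:ℝ) := by exact_mod_cast ha2
      have c3 : (1:ℝ) ≤ (b:ℝ) := by exact_mod_cast hb1
      have c4 : (b:ℝ) ≤ (Δ:ℝ) := by exact_mod_cast hb2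
      constructor <;> linarith
    have h1 : dist p q ≤ Real.sqrt (d * (Δ:ℝ)^2) := dist_le_sqrt_of_coord p q _ hB
    have h2 : Real.sqrt (d * (Δ:ℝ)^2) ≤ (2:ℝ)^(d+L) := by
      rw [show ((2:ℝ)^(d+L)) = Real.sqrt (((2:ℝ)^(d+L))^2) from (Real.sqrt_sq (by positivity)).symm]
      apply Real.sqrt_le_sqrt
      have hd2 : (d:ℝ) ≤ (2:ℝ)^d := by exact_mod_cast (Nat.lt_two_pow_self (n := d)).le
      have hΔ2 : (Δ:ℝ) ≤ (2:ℝ)^L := by exact_mod_cast Nat.le_pow_clog one_lt_two Δ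
      have h3 : (Δ:ℝ)^2 ≤ ((2:ℝ)^L)^2 :=
        pow_le_pow_left₀ (by positivity) hΔ2 2
      have e1 : ((2:ℝ)^(d+L))^2 = ((2:ℝ)^d * (2:ℝ)^d) * ((2:ℝ)^L)^2 := by
        rw [pow_add]; ring
      rw [e1]
      have h4 : (1:ℝ) ≤ (2:ℝ)^d := one_le_pow₀ (by norm_num)
      calc (d:ℝ) * (Δ:ℝ)^2 ≤ (2:ℝ)^d * ((2:ℝ)^L)^2 :=
            mul_le_mul hd2 h3 (by positivity) (by positivity)
      _ ≤ ((2:ℝ)^d * (2:ℝ)^d) * ((2:ℝ)^L)^2 := by nlinarith [sq_nonneg ((2:ℝ)^L), pow_pos (show (0:ℝ) < 2 by norm_num) d]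
    linarith
  -- OPT facts
  set Opt := uflOPT d f P with hOptdef
  have hOptS : Opt = sInf {c : ℝ | ∃ F : Finset (EuclideanSpace ℝ (Fin d)),
      F.Nonempty ∧ c = uflCost d f P F} := rfl
  have hSne : {c : ℝ | ∃ F : Finset (EuclideanSpace ℝ (Fin d)),
      F.Nonempty ∧ c = uflCost d f P F}.Nonempty :=
    ⟨uflCost d f P {0}, ⟨{0}, Finset.singleton_nonempty _, rfl⟩⟩
  have hlb : ∀ c ∈ {c : ℝ | ∃ F : Finset (EuclideanSpace ℝ (Fin d)),
      F.Nonempty ∧ c = uflCost d f P F}, f ≤ c := by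
    rintro c ⟨F, hFne, rfl⟩
    have h1 : (0:ℝ) ≤ ∑ p ∈ P, Metric.infDist p (F : Set (EuclideanSpace ℝ (Fin d))) :=
      Finset.sum_nonneg fun p _ => Metric.infDist_nonneg
    have h2 : (1:ℝ) ≤ (F.card:ℝ) := by exact_mod_cast hFne.card_pos
    have h3 : f * 1 ≤ f * F.card := mul_le_mul_of_nonneg_left h2 hf.le
    unfold uflCost
    linarith
  have hfOpt : f ≤ Opt := by rw [hOptS]; exact le_csInf hSne hlb
  have hOpt0 : 0 < Opt := lt_of_lt_of_le hf hfOpt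
  -- a near-optimal solution
  obtain ⟨c₀, hc₀mem, hc₀lt⟩ := exists_lt_of_csInf_lt hSne
    (show sInf {c : ℝ | ∃ F : Finset (EuclideanSpace ℝ (Fin d)),
      F.Nonempty ∧ c = uflCost d f P F} < (3/2) * Opt by rw [← hOptS]; linarith)
  obtain ⟨F₀, hF₀ne, rfl⟩ := hc₀mem
  -- project facilities onto P
  have hminP : ∀ x : EuclideanSpace ℝ (Fin d), ∃ y, y ∈ P ∧ ∀ q ∈ P, dist x y ≤ dist x q := by
    intro x
    obtain ⟨y, hy, hmin⟩ := P.exists_min_image (fun q => dist x q) hP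
    exact ⟨y, hy, hmin⟩
  choose π hπP hπmin using hminP
  set F := F₀.image π with hFdef
  have hFsub : F ⊆ P := by
    intro x hx
    obtain ⟨y, _, rfl⟩ := Finset.mem_image.mp hx
    exact hπP y
  have hFne : F.Nonempty := hF₀ne.image π
  -- nearest facility in F₀
  have hminF₀ : ∀ x : EuclideanSpace ℝ (Fin d), ∃ y, y ∈ F₀ ∧ ∀ q ∈ F₀, dist x y ≤ dist x q := by
    intro x
    obtain ⟨y, hy, hmin⟩ := F₀.exists_min_image (fun q => dist x q) hF₀ne
    exact ⟨y, hy, hmin⟩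
  choose m hmF₀ hmmin using hminF₀
  have hinfF₀ : ∀ p, dist p (m p) = Metric.infDist p (F₀ : Set (EuclideanSpace ℝ (Fin d))) := by
    intro p
    apply le_antisymm
    · by_contra hcon
      push_neg at hcon
      obtain ⟨y, hy, hlt⟩ := (Metric.infDist_lt_iff ⟨m p, Finset.mem_coe.mpr (hmF₀ p)⟩).mp hcon
      exact absurd (hmmin p y (Finset.mem_coe.mp hy)) (not_le.mpr hlt)
    · exact Metric.infDist_le_dist_of_mem (Finset.mem_coe.mpr (hmF₀ p))
  have hinfF : ∀ p ∈ P, Metric.infDist p (F : Set (EuclideanSpace ℝ (Fin d)))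
      ≤ 2 * Metric.infDist p (F₀ : Set (EuclideanSpace ℝ (Fin d))) := by
    intro p hp
    have h1 : Metric.infDist p (F : Set (EuclideanSpace ℝ (Fin d))) ≤ dist p (π (m p)) :=
      Metric.infDist_le_dist_of_mem (Finset.mem_coe.mpr (Finset.mem_image_of_mem π (hmF₀ p)))
    have h2 : dist (m p) (π (m p)) ≤ dist (m p) p := hπmin (m p) p hp
    have h3 : dist p (π (m p)) ≤ dist p (m p) + dist (m p) (π (m p)) := dist_triangle _ _ _
    have h4 : dist (m p) p = dist p (m p) := dist_comm _ _
    rw [← hinfF₀ p]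
    linarith
  have hcostF : uflCost d f P F ≤ 3 * Opt := by
    have h1 : ∑ p ∈ P, Metric.infDist p (F : Set (EuclideanSpace ℝ (Fin d)))
        ≤ ∑ p ∈ P, 2 * Metric.infDist p (F₀ : Set (EuclideanSpace ℝ (Fin d))) :=
      Finset.sum_le_sum (fun p hp => hinfF p hp)
    have h2 : (F.card:ℝ) ≤ (F₀.card:ℝ) := by exact_mod_cast Finset.card_image_le
    have h3 : (0:ℝ) ≤ ∑ p ∈ P, Metric.infDist p (F₀ : Set (EuclideanSpace ℝ (Fin d))) :=
      Finset.sum_nonneg fun p _ => Metric.infDist_nonneg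
    have h5 : f * F.card ≤ f * F₀.card := mul_le_mul_of_nonneg_left h2 hf.le
    have h6 : (0:ℝ) ≤ f * F₀.card := by positivity
    unfold uflCost at hc₀lt ⊢
    rw [← Finset.mul_sum] at h1
    linarith
  -- nearest facility in F (assignment map g)
  have hminF : ∀ x : EuclideanSpace ℝ (Fin d), ∃ y, y ∈ F ∧ ∀ q ∈ F, dist x y ≤ dist x q := by
    intro x
    obtain ⟨y, hy, hmin⟩ := F.exists_min_image (fun q => dist x q) hFne
    exact ⟨y, hy, hmin⟩
  choose g hgF hgmin using hminF
  have hgP : ∀ x, g x ∈ P := fun x => hFsub (hgF x)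
  have hDinf : ∀ p, dist p (g p) = Metric.infDist p (F : Set (EuclideanSpace ℝ (Fin d))) := by
    intro p
    apply le_antisymm
    · by_contra hcon
      push_neg at hcon
      obtain ⟨y, hy, hlt⟩ := (Metric.infDist_lt_iff ⟨g p, Finset.mem_coe.mpr (hgF p)⟩).mp hcon
      exact absurd (hgmin p y (Finset.mem_coe.mp hy)) (not_le.mpr hlt)
    · exact Metric.infDist_le_dist_of_mem (Finset.mem_coe.mpr (hgF p))
  -- the annulus index ν
  have hex : ∀ x : EuclideanSpace ℝ (Fin d), ∃ n : ℕ, dist x (g x) ≤ (2:ℝ)^n / 2 := by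
    intro x
    obtain ⟨n, hn⟩ := pow_unbounded_of_one_lt (2 * dist x (g x)) (one_lt_two (α := ℝ))
    exact ⟨n, by linarith⟩
  obtain ⟨ν, hν1, hν2⟩ : ∃ ν : (EuclideanSpace ℝ (Fin d)) → ℕ,
      (∀ x, dist x (g x) ≤ (2:ℝ)^(ν x) / 2) ∧
      (∀ x, ∀ mm : ℕ, mm < ν x → ¬(dist x (g x) ≤ (2:ℝ)^mm / 2)) :=
    ⟨fun x => Nat.find (hex x), fun x => Nat.find_spec (hex x),
     fun x mm hmm => Nat.find_min (hex x) hmm⟩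
  have hν3 : ∀ p ∈ P, ν p ≤ d + L + 1 := by
    intro p hp
    by_contra hcon
    push_neg at hcon
    have h1 : dist p (g p) ≤ (2:ℝ)^(d+L+1) / 2 := by
      have := hub p hp (g p) (hgP p)
      have e : (2:ℝ)^(d+L+1) / 2 = (2:ℝ)^(d+L) := by rw [pow_succ]; ring
      rw [e]; exact this
    exact hν2 p (d+L+1) hcon h1
  have hν4 : ∀ p ∈ P, ν p = 0 → p = g p := by
    intro p hp h0
    by_contra hne
    have h1 : (1:ℝ) ≤ dist p (g p) := hsep p hp (g p) (hgP p) hne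
    have h2 := hν1 p
    rw [h0] at h2
    norm_num at h2
    linarith
  have hν5 : ∀ x, 1 ≤ ν x → (2:ℝ)^(ν x) < 4 * dist x (g x) := by
    intro x h1
    obtain ⟨mm, hmm⟩ : ∃ mm, ν x = mm + 1 := ⟨ν x - 1, by omega⟩
    have h2 := hν2 x mm (by omega)
    push_neg at h2
    rw [hmm, pow_succ]
    linarith
  -- a rank function, injective on P
  obtain ⟨r, hrinj⟩ : ∃ r : (EuclideanSpace ℝ (Fin d)) → ℕ,
      ∀ p ∈ P, ∀ q ∈ P, r p = r q → p = q := by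
    refine ⟨fun p => if h : p ∈ P then ((P.equivFin ⟨p, h⟩ : Fin P.card) : ℕ) else 0, ?_⟩
    intro p hp q hq hr
    simp only [dif_pos hp, dif_pos hq] at hr
    have := P.equivFin.injective (Fin.val_injective hr)
    exact congrArg Subtype.val this
  -- chunk size
  obtain ⟨k, hk⟩ : ∃ k : ℕ → ℕ, ∀ n, k n = max 1 ⌈f / (2:ℝ)^n⌉₊ := ⟨_, fun _ => rfl⟩
  have hk0 : ∀ n, 0 < k n := by intro n; rw [hk]; omega
  have hkf : ∀ n, f / (2:ℝ)^n ≤ (k n : ℝ) := by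
    intro n
    rw [hk]
    calc f / (2:ℝ)^n ≤ (⌈f / (2:ℝ)^n⌉₊ : ℝ) := Nat.le_ceil _
    _ ≤ ((max 1 ⌈f / (2:ℝ)^n⌉₊ : ℕ) : ℝ) := by exact_mod_cast le_max_right _ _
  have hk2 : ∀ n, 2 ≤ k n → (k n : ℝ) ≤ 2 * (f / (2:ℝ)^n) := by
    intro n h
    rw [hk] at h ⊢
    have h1 : (2:ℕ) ≤ ⌈f / (2:ℝ)^n⌉₊ := by omega
    have h0 : max 1 ⌈f / (2:ℝ)^n⌉₊ = ⌈f / (2:ℝ)^n⌉₊ := by omega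
    have h2 : (1:ℝ) < f / (2:ℝ)^n := by
      by_contra hc
      push_neg at hc
      have : ⌈f / (2:ℝ)^n⌉₊ ≤ 1 := by
        calc ⌈f / (2:ℝ)^n⌉₊ ≤ ⌈(1:ℝ)⌉₊ := Nat.ceil_le_ceil hc
        _ = 1 := by simp
      omega
    have h3 : (⌈f / (2:ℝ)^n⌉₊ : ℝ) < f / (2:ℝ)^n + 1 := Nat.ceil_lt_add_one (by linarith)
    rw [h0]
    linarith
  -- in-annulus rank ρ
  obtain ⟨ρ, hρ⟩ : ∃ ρ : (EuclideanSpace ℝ (Fin d)) → ℕ,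
      ∀ p, ρ p = (P.filter (fun q => (g q, ν q) = (g p, ν p) ∧ r q < r p)).card :=
    ⟨_, fun _ => rfl⟩
  have hρbound : ∀ p ∈ P, ρ p < (P.filter (fun q => (g q, ν q) = (g p, ν p))).card := by
    intro p hp
    rw [hρ]
    have hsubs : P.filter (fun q => (g q, ν q) = (g p, ν p) ∧ r q < r p)
        ⊆ (P.filter (fun q => (g q, ν q) = (g p, ν p))).erase p := by
      intro x hx
      obtain ⟨hxP, hx1, hx2⟩ := Finset.mem_filter.mp hx
      refine Finset.mem_erase.mpr ⟨?_, Finset.mem_filter.mpr ⟨hxP, hx1⟩⟩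
      intro hxp
      rw [hxp] at hx2
      omega
    have hmemp : p ∈ P.filter (fun q => (g q, ν q) = (g p, ν p)) :=
      Finset.mem_filter.mpr ⟨hp, rfl⟩
    calc (P.filter (fun q => (g q, ν q) = (g p, ν p) ∧ r q < r p)).card
        ≤ ((P.filter (fun q => (g q, ν q) = (g p, ν p))).erase p).card :=
          Finset.card_le_card hsubs
    _ = (P.filter (fun q => (g q, ν q) = (g p, ν p))).card - 1 :=
          Finset.card_erase_of_mem hmemp
    _ < (P.filter (fun q => (g q, ν q) = (g p, ν p))).card := by
          have : 0 < (P.filter (fun q => (g q, ν q) = (g p, ν p))).card :=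
            Finset.card_pos.mpr ⟨p, hmemp⟩
          omega
  have hρinj : ∀ p ∈ P, ∀ q ∈ P, (g p, ν p) = (g q, ν q) → ρ p = ρ q → p = q := by
    intro p hp q hq heq hρeq
    by_contra hne
    have hrne : r p ≠ r q := fun h => hne (hrinj p hp q hq h)
    rcases lt_or_gt_of_ne hrne with hlt | hlt
    · -- r p < r q : ρ p < ρ q
      have hss : P.filter (fun x => (g x, ν x) = (g p, ν p) ∧ r x < r p)
          ⊂ P.filter (fun x => (g x, ν x) = (g q, ν q) ∧ r x < r q) := by
        constructor
        · intro x hx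
          obtain ⟨hxP, hx1, hx2⟩ := Finset.mem_filter.mp hx
          exact Finset.mem_filter.mpr ⟨hxP, by rw [← heq]; exact hx1, by omega⟩
        · intro hcon
          have hpmem : p ∈ P.filter (fun x => (g x, ν x) = (g q, ν q) ∧ r x < r q) :=
            Finset.mem_filter.mpr ⟨hp, by rw [← heq], hlt⟩
          have := hcon hpmem
          obtain ⟨_, _, h2⟩ := Finset.mem_filter.mp this
          omega
      have := Finset.card_lt_card hss
      rw [hρ p, hρ q] at hρeq
      omega
    · have hss : P.filter (fun x => (g x, ν x) = (g q, ν q) ∧ r x < r q)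
          ⊂ P.filter (fun x => (g x, ν x) = (g p, ν p) ∧ r x < r p) := by
        constructor
        · intro x hx
          obtain ⟨hxP, hx1, hx2⟩ := Finset.mem_filter.mp hx
          exact Finset.mem_filter.mpr ⟨hxP, by rw [heq]; exact hx1, by omega⟩
        · intro hcon
          have hqmem : q ∈ P.filter (fun x => (g x, ν x) = (g p, ν p) ∧ r x < r p) :=
            Finset.mem_filter.mpr ⟨hq, by rw [heq], hlt⟩
          have := hcon hqmem
          obtain ⟨_, _, h2⟩ := Finset.mem_filter.mp this
          omega
      have := Finset.card_lt_card hss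
      rw [hρ p, hρ q] at hρeq
      omega
  -- the label
  obtain ⟨Lab, hLab⟩ : ∃ Lab : (EuclideanSpace ℝ (Fin d)) → (EuclideanSpace ℝ (Fin d)) × ℕ × ℕ,
      ∀ p, Lab p = (g p, ν p, ρ p / k (ν p)) := ⟨_, fun _ => rfl⟩
  have hLab2 : ∀ p q, Lab p = Lab q → (g p, ν p) = (g q, ν q) ∧ ρ p / k (ν p) = ρ q / k (ν q) := by
    intro p q h
    rw [hLab, hLab] at h
    have h1 : g p = g q := congrArg Prod.fst h
    have h2 : ν p = ν q := congrArg (fun t => t.2.1) h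
    have h3 : ρ p / k (ν p) = ρ q / k (ν q) := congrArg (fun t => t.2.2) h
    exact ⟨by rw [h1, h2], h3⟩
  -- the partition: fibers of the label
  set 𝒞 := P.image (fun p => P.filter (fun q => Lab q = Lab p)) with h𝒞def
  have h𝒞mem : ∀ S ∈ 𝒞, S.Nonempty ∧ S ⊆ P := by
    intro S hS
    obtain ⟨p, hp, rfl⟩ := Finset.mem_image.mp hS
    exact ⟨⟨p, Finset.mem_filter.mpr ⟨hp, rfl⟩⟩, Finset.filter_subset _ _⟩
  have h𝒞uniq : ∀ p ∈ P, ∃! S, S ∈ 𝒞 ∧ p ∈ S := by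
    intro p hp
    refine ⟨P.filter (fun q => Lab q = Lab p),
      ⟨Finset.mem_image_of_mem _ hp, Finset.mem_filter.mpr ⟨hp, rfl⟩⟩, ?_⟩
    rintro T ⟨hT, hpT⟩
    obtain ⟨p', hp', rfl⟩ := Finset.mem_image.mp hT
    obtain ⟨_, hpp'⟩ := Finset.mem_filter.mp hpT
    ext q
    simp only [Finset.mem_filter, hpp']
  -- size bound for each part
  have hsize : ∀ S ∈ 𝒞, 0 < Metric.diam (S : Set (EuclideanSpace ℝ (Fin d))) →
      (S.card : ℝ) ≤ 100 * f / Metric.diam (S : Set (EuclideanSpace ℝ (Fin d))) := by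
    intro S hS hdiam
    obtain ⟨p₀, hp₀, rfl⟩ := Finset.mem_image.mp hS
    set T := P.filter (fun q => Lab q = Lab p₀) with hTdef
    have hTmem : ∀ q ∈ T, q ∈ P ∧ Lab q = Lab p₀ := fun q hq => Finset.mem_filter.mp hq
    have h2card : 2 ≤ T.card := by
      by_contra hc
      push_neg at hc
      have hsub : (T : Set (EuclideanSpace ℝ (Fin d))).Subsingleton := by
        intro a ha b hb
        exact Finset.card_le_one.mp (by omega) a (Finset.mem_coe.mp ha) b (Finset.mem_coe.mp hb)
      rw [Metric.diam_subsingleton hsub] at hdiam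
      exact lt_irrefl 0 hdiam
    have hν₀pos : 1 ≤ ν p₀ := by
      by_contra hc
      push_neg at hc
      have hsub : T ⊆ {g p₀} := by
        intro q hq
        obtain ⟨hqP, hqL⟩ := hTmem q hq
        have hgν := (hLab2 q p₀ hqL).1
        have hgq : g q = g p₀ := congrArg Prod.fst hgν
        have hνq : ν q = ν p₀ := congrArg Prod.snd hgν
        have hqg : q = g q := hν4 q hqP (by omega)
        rw [Finset.mem_singleton, hqg, hgq]
      have := Finset.card_le_card hsub
      simp only [Finset.card_singleton] at this
      omega
    have hdle : Metric.diam (T : Set (EuclideanSpace ℝ (Fin d))) ≤ (2:ℝ)^(ν p₀) := by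
      apply Metric.diam_le_of_forall_dist_le (by positivity)
      intro x hx y hy
      obtain ⟨hxP, hxL⟩ := hTmem x (Finset.mem_coe.mp hx)
      obtain ⟨hyP, hyL⟩ := hTmem y (Finset.mem_coe.mp hy)
      have hgx : g x = g p₀ := congrArg Prod.fst (hLab2 x p₀ hxL).1
      have hgy : g y = g p₀ := congrArg Prod.fst (hLab2 y p₀ hyL).1
      have hνx : ν x = ν p₀ := congrArg Prod.snd (hLab2 x p₀ hxL).1
      have hνy : ν y = ν p₀ := congrArg Prod.snd (hLab2 y p₀ hyL).1
      have h1 := hν1 x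
      have h2 := hν1 y
      rw [hνx, hgx] at h1
      rw [hνy, hgy] at h2
      calc dist x y ≤ dist x (g p₀) + dist y (g p₀) := dist_triangle_right _ _ _
      _ ≤ (2:ℝ)^(ν p₀)/2 + (2:ℝ)^(ν p₀)/2 := add_le_add h1 h2
      _ = (2:ℝ)^(ν p₀) := by ring
    set k₀ := k (ν p₀) with hk₀def
    set i₀ := ρ p₀ / k₀ with hi₀def
    have hcardk : T.card ≤ k₀ := by
      have hmapsto : ∀ q ∈ T, ρ q ∈ Finset.Ico (k₀ * i₀) (k₀ * i₀ + k₀) := by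
        intro q hq
        obtain ⟨hqP, hqL⟩ := hTmem q hq
        have hνq : ν q = ν p₀ := congrArg Prod.snd (hLab2 q p₀ hqL).1
        have hdiv : ρ q / k₀ = i₀ := by
          have h3 := (hLab2 q p₀ hqL).2
          rw [hνq] at h3
          exact h3
        have h1 := Nat.div_add_mod (ρ q) k₀
        rw [hdiv] at h1
        have h2 := Nat.mod_lt (ρ q) (show 0 < k₀ from hk0 (ν p₀))
        rw [Finset.mem_Ico]
        omega
      have hinj : Set.InjOn ρ (T : Set (EuclideanSpace ℝ (Fin d))) := by
        intro a ha b hb hab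
        obtain ⟨haP, haL⟩ := hTmem a (Finset.mem_coe.mp ha)
        obtain ⟨hbP, hbL⟩ := hTmem b (Finset.mem_coe.mp hb)
        exact hρinj a haP b hbP (by rw [(hLab2 a p₀ haL).1, (hLab2 b p₀ hbL).1]) hab
      calc T.card ≤ (Finset.Ico (k₀ * i₀) (k₀ * i₀ + k₀)).card :=
            Finset.card_le_card_of_injOn ρ hmapsto hinj
      _ = k₀ := by rw [Nat.card_Ico]; omega
    have hk₀2 : 2 ≤ k₀ := le_trans h2card hcardk
    have hk₀le : (k₀:ℝ) ≤ 2 * (f / (2:ℝ)^(ν p₀)) := hk2 _ hk₀2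
    have hprod : (T.card : ℝ) * Metric.diam (T : Set (EuclideanSpace ℝ (Fin d))) ≤ 2 * f := by
      calc (T.card : ℝ) * Metric.diam (T : Set (EuclideanSpace ℝ (Fin d)))
          ≤ (k₀:ℝ) * (2:ℝ)^(ν p₀) :=
            mul_le_mul (by exact_mod_cast hcardk) hdle Metric.diam_nonneg (by positivity)
      _ ≤ (2 * (f / (2:ℝ)^(ν p₀))) * (2:ℝ)^(ν p₀) :=
            mul_le_mul_of_nonneg_right hk₀le (by positivity)
      _ = 2 * f := by field_simp
    have hfin : (T.card:ℝ) ≤ 2 * f / Metric.diam (T : Set (EuclideanSpace ℝ (Fin d))) :=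
      (le_div_iff₀ hdiam).mpr hprod
    have hmono : 2 * f / Metric.diam (T : Set (EuclideanSpace ℝ (Fin d)))
        ≤ 100 * f / Metric.diam (T : Set (EuclideanSpace ℝ (Fin d))) :=
      (div_le_div_iff_of_pos_right hdiam).mpr (by linarith)
    linarith
  -- count bound
  have hcard1 : 𝒞.card ≤ (P.image Lab).card := by
    have he : 𝒞 = (P.image Lab).image (fun l => P.filter (fun q => Lab q = l)) := by
      rw [Finset.image_image]
      rfl
    rw [he]
    exact Finset.card_image_le
  set L₂ := fun p : EuclideanSpace ℝ (Fin d) => (g p, ν p) with hL₂def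
  have hsubB : P.image Lab ⊆ (P.image L₂).biUnion
      (fun t => (P.filter (fun p => L₂ p = t)).image Lab) := by
    intro l hl
    obtain ⟨p, hp, rfl⟩ := Finset.mem_image.mp hl
    apply Finset.mem_biUnion.mpr
    exact ⟨L₂ p, Finset.mem_image_of_mem _ hp,
      Finset.mem_image_of_mem _ (Finset.mem_filter.mpr ⟨hp, rfl⟩)⟩
  have hcard2 : (P.image Lab).card ≤
      ∑ t ∈ P.image L₂, ((P.filter (fun p => L₂ p = t)).image Lab).card :=
    le_trans (Finset.card_le_card hsubB) Finset.card_biUnion_le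
  have hfib : ∀ t ∈ P.image L₂,
      f * (((P.filter (fun p => L₂ p = t)).image Lab).card : ℝ)
        ≤ f + 4 * ∑ q ∈ P.filter (fun p => L₂ p = t), dist q (g q) := by
    intro t ht
    obtain ⟨p₀, hp₀, hL₂p₀⟩ := Finset.mem_image.mp ht
    set T := P.filter (fun p => L₂ p = t) with hTdef
    have hTmem : ∀ q ∈ T, q ∈ P ∧ (g q, ν q) = t := fun q hq => Finset.mem_filter.mp hq
    have hTne : p₀ ∈ T := Finset.mem_filter.mpr ⟨hp₀, hL₂p₀⟩
    have hTcard1 : 1 ≤ T.card := Finset.card_pos.mpr ⟨p₀, hTne⟩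
    have hSnn : (0:ℝ) ≤ ∑ q ∈ T, dist q (g q) := Finset.sum_nonneg fun q _ => dist_nonneg
    have himgcnt : (T.image Lab).card ≤ (T.card - 1) / k t.2 + 1 := by
      have hTimg : T.image Lab
          = (T.image (fun q => ρ q / k t.2)).image (fun j => (t.1, t.2, j)) := by
        rw [Finset.image_image]
        apply Finset.image_congr
        intro q hq
        obtain ⟨hqP, hqt⟩ := hTmem q (Finset.mem_coe.mp hq)
        simp only [Function.comp]
        rw [hLab]
        have h1 : g q = t.1 := congrArg Prod.fst hqt
        have h2 : ν q = t.2 := congrArg Prod.snd hqt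
        rw [h1, h2]
      have hsub2 : T.image (fun q => ρ q / k t.2) ⊆ Finset.range ((T.card - 1) / k t.2 + 1) := by
        intro j hj
        obtain ⟨q, hq, rfl⟩ := Finset.mem_image.mp hj
        obtain ⟨hqP, hqt⟩ := hTmem q hq
        rw [Finset.mem_range]
        have hfilT : P.filter (fun x => (g x, ν x) = (g q, ν q)) = T := by
          rw [hTdef]
          apply Finset.filter_congr
          intro x _
          simp only [hL₂def]
          rw [hqt]
        have hρq : ρ q < T.card := by
          have h1 := hρbound q hqP
          rw [hfilT] at h1
          exact h1
        have h2 : ρ q / k t.2 ≤ (T.card - 1) / k t.2 := Nat.div_le_div_right (by omega)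
        omega
      calc (T.image Lab).card
          = ((T.image (fun q => ρ q / k t.2)).image (fun j => (t.1, t.2, j))).card := by rw [hTimg]
      _ ≤ (T.image (fun q => ρ q / k t.2)).card := Finset.card_image_le
      _ ≤ (Finset.range ((T.card - 1) / k t.2 + 1)).card := Finset.card_le_card hsub2
      _ = (T.card - 1) / k t.2 + 1 := Finset.card_range _
    rcases Nat.eq_zero_or_pos t.2 with h0 | hpos
    · have hTsub : T ⊆ {t.1} := by
        intro q hq
        obtain ⟨hqP, hqt⟩ := hTmem q hq
        have h2 : ν q = t.2 := congrArg Prod.snd hqt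
        have h1 : g q = t.1 := congrArg Prod.fst hqt
        have hqg := hν4 q hqP (by omega)
        rw [Finset.mem_singleton, hqg, h1]
      have hT1 : T.card = 1 := by
        have := Finset.card_le_card hTsub
        simp only [Finset.card_singleton] at this
        omega
      have hcnt1 : (T.image Lab).card ≤ 1 := by
        rw [hT1] at himgcnt
        simpa using himgcnt
      have hcast : ((T.image Lab).card : ℝ) ≤ 1 := by exact_mod_cast hcnt1
      nlinarith
    · have hlow : ∀ q ∈ T, (2:ℝ)^(t.2) < 4 * dist q (g q) := by
        intro q hq
        obtain ⟨hqP, hqt⟩ := hTmem q hq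
        have h2 : ν q = t.2 := congrArg Prod.snd hqt
        have h3 := hν5 q (by omega)
        rw [h2] at h3
        exact h3
      have hsum : (T.card : ℝ) * (2:ℝ)^(t.2) ≤ 4 * ∑ q ∈ T, dist q (g q) := by
        calc (T.card : ℝ) * (2:ℝ)^(t.2) = ∑ _q ∈ T, (2:ℝ)^(t.2) := by
              rw [Finset.sum_const, nsmul_eq_mul]
        _ ≤ ∑ q ∈ T, 4 * dist q (g q) := Finset.sum_le_sum (fun q hq => (hlow q hq).le)
        _ = 4 * ∑ q ∈ T, dist q (g q) := by rw [Finset.mul_sum]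
      have hc1 : ((T.image Lab).card : ℝ) ≤ ((T.card:ℝ) - 1)/(k t.2) + 1 := by
        calc ((T.image Lab).card : ℝ) ≤ (((T.card - 1) / k t.2 + 1 : ℕ) : ℝ) := by
              exact_mod_cast himgcnt
        _ = (((T.card - 1) / k t.2 : ℕ) : ℝ) + 1 := by push_cast; ring
        _ ≤ ((T.card - 1 : ℕ) : ℝ)/((k t.2 : ℕ):ℝ) + 1 := by
              have := Nat.cast_div_le (α := ℝ) (m := T.card - 1) (n := k t.2)
              linarith
        _ = ((T.card:ℝ) - 1)/(k t.2) + 1 := by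
              rw [Nat.cast_sub hTcard1]
              norm_num
      have hkpos : (0:ℝ) < (k t.2 : ℝ) := by exact_mod_cast hk0 t.2
      have hfk : f / (k t.2) ≤ (2:ℝ)^(t.2) := by
        have h1 := hkf t.2
        rw [div_le_iff₀ hkpos]
        have h2 : f / (2:ℝ)^(t.2) * (2:ℝ)^(t.2) ≤ (k t.2 : ℝ) * (2:ℝ)^(t.2) :=
          mul_le_mul_of_nonneg_right h1 (by positivity)
        rw [div_mul_cancel₀] at h2
        · linarith [h2]
        · positivity
      have hmain : f * (((T.card:ℝ) - 1)/(k t.2) + 1) ≤ f + 4 * ∑ q ∈ T, dist q (g q) := by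
        have h1 : f * (((T.card:ℝ) - 1)/(k t.2)) ≤ (2:ℝ)^(t.2) * ((T.card:ℝ) - 1) := by
          have e : f * (((T.card:ℝ) - 1)/(k t.2)) = (f / k t.2) * ((T.card:ℝ) - 1) := by ring
          rw [e]
          apply mul_le_mul_of_nonneg_right hfk
          have : (1:ℝ) ≤ (T.card:ℝ) := by exact_mod_cast hTcard1
          linarith
        have hp2 : (0:ℝ) < (2:ℝ)^(t.2) := by positivity
        nlinarith [hsum]
      calc f * ((T.image Lab).card : ℝ) ≤ f * (((T.card:ℝ) - 1)/(k t.2) + 1) :=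
            mul_le_mul_of_nonneg_left hc1 hf.le
      _ ≤ f + 4 * ∑ q ∈ T, dist q (g q) := hmain
  have hsum1 : f * ((P.image Lab).card : ℝ) ≤
      ∑ t ∈ P.image L₂, (f + 4 * ∑ q ∈ P.filter (fun p => L₂ p = t), dist q (g q)) := by
    have h1 : ((P.image Lab).card : ℝ)
        ≤ ∑ t ∈ P.image L₂, (((P.filter (fun p => L₂ p = t)).image Lab).card : ℝ) := by
      exact_mod_cast hcard2
    calc f * ((P.image Lab).card : ℝ)
        ≤ f * ∑ t ∈ P.image L₂, (((P.filter (fun p => L₂ p = t)).image Lab).card : ℝ) :=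
          mul_le_mul_of_nonneg_left h1 hf.le
    _ = ∑ t ∈ P.image L₂, f * (((P.filter (fun p => L₂ p = t)).image Lab).card : ℝ) :=
          Finset.mul_sum _ _ _
    _ ≤ ∑ t ∈ P.image L₂, (f + 4 * ∑ q ∈ P.filter (fun p => L₂ p = t), dist q (g q)) :=
          Finset.sum_le_sum hfib
  have hsum2 : ∑ t ∈ P.image L₂, (f + 4 * ∑ q ∈ P.filter (fun p => L₂ p = t), dist q (g q))
      = ((P.image L₂).card : ℝ) * f + 4 * ∑ p ∈ P, dist p (g p) := by
    rw [Finset.sum_add_distrib, Finset.sum_const, ← Finset.mul_sum, nsmul_eq_mul]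
    congr 1
    congr 1
    exact Finset.sum_fiberwise_of_maps_to (fun p hp => Finset.mem_image_of_mem _ hp) _
  have himg2card : ((P.image L₂).card : ℝ) ≤ (F.card : ℝ) * ((d:ℝ) + L + 2) := by
    have hsub : P.image L₂ ⊆ F ×ˢ Finset.range (d + L + 2) := by
      intro t ht
      obtain ⟨p, hp, rfl⟩ := Finset.mem_image.mp ht
      rw [Finset.mem_product]
      constructor
      · simp only [hL₂def]
        exact hgF p
      · simp only [hL₂def]
        exact Finset.mem_range.mpr (by have := hν3 p hp; omega)
    have h1 := Finset.card_le_card hsub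
    rw [Finset.card_product, Finset.card_range] at h1
    have h2 : ((P.image L₂).card : ℝ) ≤ ((F.card * (d + L + 2) : ℕ) : ℝ) := by exact_mod_cast h1
    calc ((P.image L₂).card : ℝ) ≤ ((F.card * (d + L + 2) : ℕ) : ℝ) := h2
    _ = (F.card : ℝ) * ((d:ℝ) + L + 2) := by push_cast; ring
  -- assemble the count bound
  have hDsum : ∑ p ∈ P, dist p (g p)
      = ∑ p ∈ P, Metric.infDist p (F : Set (EuclideanSpace ℝ (Fin d))) :=
    Finset.sum_congr rfl (fun p _ => hDinf p)
  have hcount : f * (𝒞.card : ℝ) ≤ 100 * d * Real.logb 2 Δ * Opt := by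
    set cost := uflCost d f P F with hcostdef
    have hcost_eq : cost = ∑ p ∈ P, Metric.infDist p (F : Set (EuclideanSpace ℝ (Fin d)))
        + f * F.card := rfl
    have hSnn : (0:ℝ) ≤ ∑ p ∈ P, Metric.infDist p (F : Set (EuclideanSpace ℝ (Fin d))) :=
      Finset.sum_nonneg fun p _ => Metric.infDist_nonneg
    have hfFnn : (0:ℝ) ≤ f * F.card := mul_nonneg hf.le (Nat.cast_nonneg _)
    have hSle : ∑ p ∈ P, Metric.infDist p (F : Set (EuclideanSpace ℝ (Fin d))) ≤ cost := by
      rw [hcost_eq]; linarith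
    have hfFle : f * F.card ≤ cost := by rw [hcost_eq]; linarith
    have hcostnn : (0:ℝ) ≤ cost := by rw [hcost_eq]; linarith
    have hdLnn : (0:ℝ) ≤ (d:ℝ) + L + 2 := by
      have c1 : (0:ℝ) ≤ (d:ℝ) := Nat.cast_nonneg _
      have c2 : (0:ℝ) ≤ (L:ℝ) := Nat.cast_nonneg _
      linarith
    have hdLnn6 : (0:ℝ) ≤ (d:ℝ) + L + 6 := by linarith
    have hA : f * ((P.image Lab).card : ℝ) ≤ ((d:ℝ) + L + 2) * cost + 4 * cost := by
      have h1 : f * ((P.image Lab).card : ℝ)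
          ≤ ((P.image L₂).card : ℝ) * f + 4 * ∑ p ∈ P, dist p (g p) := by
        rw [← hsum2]; exact hsum1
      have h2 : ((P.image L₂).card : ℝ) * f ≤ ((F.card : ℝ) * ((d:ℝ) + L + 2)) * f := by
        apply mul_le_mul_of_nonneg_right himg2card hf.le
      have h3 : ((F.card : ℝ) * ((d:ℝ) + L + 2)) * f = ((d:ℝ) + L + 2) * (f * F.card) := by ring
      have h4 : ((d:ℝ) + L + 2) * (f * F.card) ≤ ((d:ℝ) + L + 2) * cost := by
        apply mul_le_mul_of_nonneg_left hfFle hdLnn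
      have h5 : 4 * ∑ p ∈ P, dist p (g p) ≤ 4 * cost := by
        rw [hDsum]; linarith
      linarith
    have hB : f * (𝒞.card : ℝ) ≤ ((d:ℝ) + L + 6) * cost := by
      have h1 : f * (𝒞.card : ℝ) ≤ f * ((P.image Lab).card : ℝ) := by
        apply mul_le_mul_of_nonneg_left _ hf.le
        exact_mod_cast hcard1
      have e : ((d:ℝ) + L + 2) * cost + 4 * cost = ((d:ℝ) + L + 6) * cost := by ring
      linarith
    have hC : ((d:ℝ) + L + 6) * cost ≤ ((d:ℝ) + L + 6) * (3 * Opt) := by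
      apply mul_le_mul_of_nonneg_left hcostF hdLnn6
    -- logb bounds
    have hlogb1 : (1:ℝ) ≤ Real.logb 2 Δ := by
      rw [← Real.logb_self_eq_one (b := 2) one_lt_two]
      exact (Real.logb_le_logb one_lt_two (by norm_num) (by positivity)).mpr (by exact_mod_cast hΔ)
    have hLlogb : (L:ℝ) ≤ 2 * Real.logb 2 Δ := by
      have hL1 : 1 ≤ L := Nat.clog_pos one_lt_two hΔ
      have h2 : (2:ℕ)^(L-1) < Δ := by
        have := Nat.pow_pred_clog_lt_self (b := 2) one_lt_two (x := Δ) hΔ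
        simpa [Nat.pred_eq_sub_one] using this
      have h3 : ((2:ℝ))^(L-1) ≤ (Δ:ℝ) := by exact_mod_cast h2.le
      have h4 : ((L:ℝ) - 1) ≤ Real.logb 2 Δ := by
        have h5 : Real.logb 2 ((2:ℝ)^(L-1)) ≤ Real.logb 2 Δ :=
          (Real.logb_le_logb one_lt_two (by positivity) (by positivity)).mpr h3
        rw [Real.logb_pow, Real.logb_self_eq_one one_lt_two] at h5
        push_cast [Nat.cast_sub hL1] at h5 ⊢
        linarith
      linarith
    have hdr : (1:ℝ) ≤ (d:ℝ) := by exact_mod_cast hd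
    have hcoef : ((d:ℝ) + L + 6) ≤ 9 * (d:ℝ) * Real.logb 2 Δ := by
      have h1 : (d:ℝ) ≤ (d:ℝ) * Real.logb 2 Δ := by nlinarith
      have h2 : (L:ℝ) ≤ 2 * ((d:ℝ) * Real.logb 2 Δ) := by nlinarith
      have h3 : (6:ℝ) ≤ 6 * ((d:ℝ) * Real.logb 2 Δ) := by nlinarith
      nlinarith
    have hdlogbnn : (0:ℝ) ≤ (d:ℝ) * Real.logb 2 Δ := by nlinarith
    calc f * (𝒞.card : ℝ) ≤ ((d:ℝ) + L + 6) * (3 * Opt) := le_trans hB hC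
    _ = (((d:ℝ) + L + 6)) * 3 * Opt := by ring
    _ ≤ (9 * (d:ℝ) * Real.logb 2 Δ) * 3 * Opt := by
          apply mul_le_mul_of_nonneg_right _ hOpt0.le
          apply mul_le_mul_of_nonneg_right hcoef (by norm_num)
    _ = 27 * ((d:ℝ) * Real.logb 2 Δ) * Opt := by ring
    _ ≤ 100 * ((d:ℝ) * Real.logb 2 Δ) * Opt := by nlinarith
    _ = 100 * d * Real.logb 2 Δ * Opt := by ring
  exact ⟨𝒞, h𝒞mem, h𝒞uniq, hcount, hsize⟩
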